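/- arXiv:2002.07909 — 2 statements merged into one kernel-verified Lean document; each statement's English description precedes it below -/
import Mathlib

section
/- The boundary value problem ∇[p(t+1)∇_{a*}^ν x(t+1)] = 0 for t ∈ ℕ_{a+1}^{b-1}, with αx(a) − β∇_{a*}^ν x(a+1) = 0 and γx(b) + δ∇_{a*}^ν x(b) = 0, has only the trivial solution if and only if ρ := αγ∇_a^{-ν}(1/p)(b) + αδ/p(b) + βγ/p(a+1) ≠ 0. -/
open Finset

/-- Generalized rising function `x^{↑μ} = Γ(x+μ)/Γ(x)` (equals 0 when `Γ x = 0`,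
matching the convention `0^{↑ν} = 0`). -/
noncomputable def rise (x μ : ℝ) : ℝ := Real.Gamma (x + μ) / Real.Gamma x

/-- Nabla (backward) difference. -/
def nabla (f : ℤ → ℝ) (t : ℤ) : ℝ := f t - f (t - 1)

/-- Caputo nabla fractional difference of order `ν ∈ (0,1)` based at `a`. -/
noncomputable def caputo (ν : ℝ) (a : ℤ) (x : ℤ → ℝ) (t : ℤ) : ℝ :=
  ∑ τ ∈ Finset.Icc (a + 1) t,
    rise ((t - τ + 1 : ℤ) : ℝ) (-ν) / Real.Gamma (1 - ν) * nabla x τ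

/-- Nabla fractional sum of order `ν` based at `a`. -/
noncomputable def fsum (ν : ℝ) (a : ℤ) (f : ℤ → ℝ) (t : ℤ) : ℝ :=
  ∑ τ ∈ Finset.Icc (a + 1) t,
    rise ((t - τ + 1 : ℤ) : ℝ) (ν - 1) / Real.Gamma ν * f τ

/-- The self-adjoint operator `L_a x(t) = ∇[p(t+1)∇_{a*}^ν x(t+1)] + q(t)x(t)`. -/
noncomputable def Lop (ν : ℝ) (a : ℤ) (p q : ℤ → ℝ) (x : ℤ → ℝ) (t : ℤ) : ℝ :=
  (p (t + 1) * caputo ν a x (t + 1) - p t * caputo ν a x t) + q t * x t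
noncomputable def cA (ν : ℝ) (m : ℕ) : ℝ :=
  Real.Gamma (m + 1 - ν) / (Real.Gamma (m + 1) * Real.Gamma (1 - ν))

noncomputable def cB (ν : ℝ) (m : ℕ) : ℝ :=
  Real.Gamma (m + ν) / (Real.Gamma (m + 1) * Real.Gamma ν)

variable {ν : ℝ} (hν : 0 < ν) (hν1 : ν < 1)

lemma gamma_nat_pos (m : ℕ) : 0 < Real.Gamma ((m : ℝ) + 1) :=
  Real.Gamma_pos_of_pos (by positivity)

include hν1 in
lemma cA_zero : cA ν 0 = 1 := by
  simp only [cA, Nat.cast_zero, zero_add, Real.Gamma_one, one_mul]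
  exact div_self (Real.Gamma_pos_of_pos (by linarith)).ne'

include hν in
lemma cB_zero : cB ν 0 = 1 := by
  simp only [cB, Nat.cast_zero, zero_add, Real.Gamma_one, one_mul]
  exact div_self (Real.Gamma_pos_of_pos hν).ne'

include hν1 in
lemma recA (m : ℕ) : ((m : ℝ) + 1) * cA ν (m + 1) = ((m : ℝ) + 1 - ν) * cA ν m := by
  have hm : (0:ℝ) ≤ (m:ℝ) := m.cast_nonneg
  have h1 : Real.Gamma (((m+1 : ℕ) : ℝ) + 1 - ν) = ((m:ℝ) + 1 - ν) * Real.Gamma ((m:ℝ) + 1 - ν) := by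
    push_cast
    rw [show (m:ℝ) + 1 + 1 - ν = ((m:ℝ) + 1 - ν) + 1 by ring,
      Real.Gamma_add_one (by intro h; nlinarith)]
  have h2 : Real.Gamma (((m+1 : ℕ) : ℝ) + 1) = ((m:ℝ) + 1) * Real.Gamma ((m:ℝ) + 1) := by
    push_cast
    rw [show (m:ℝ) + 1 + 1 = ((m:ℝ) + 1) + 1 by ring,
      Real.Gamma_add_one (by positivity)]
  unfold cA
  rw [h1, h2]
  have hg1 := gamma_nat_pos m
  have hg2 : 0 < Real.Gamma (1 - ν) := Real.Gamma_pos_of_pos (by linarith)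
  field_simp

include hν in
lemma recB (m : ℕ) : ((m : ℝ) + 1) * cB ν (m + 1) = ((m : ℝ) + ν) * cB ν m := by
  have hm : (0:ℝ) ≤ (m:ℝ) := m.cast_nonneg
  have h1 : Real.Gamma (((m+1 : ℕ) : ℝ) + ν) = ((m:ℝ) + ν) * Real.Gamma ((m:ℝ) + ν) := by
    push_cast
    rw [show (m:ℝ) + 1 + ν = ((m:ℝ) + ν) + 1 by ring,
      Real.Gamma_add_one (by positivity)]
  have h2 : Real.Gamma (((m+1 : ℕ) : ℝ) + 1) = ((m:ℝ) + 1) * Real.Gamma ((m:ℝ) + 1) := by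
    push_cast
    rw [show (m:ℝ) + 1 + 1 = ((m:ℝ) + 1) + 1 by ring,
      Real.Gamma_add_one (by positivity)]
  unfold cB
  rw [h1, h2]
  have hg1 := gamma_nat_pos m
  have hg2 : 0 < Real.Gamma ν := Real.Gamma_pos_of_pos hν
  field_simp

include hν hν1 in
lemma Slem (n : ℕ) : ∑ j ∈ range (n + 1), cA ν (n - j) * cB ν j = 1 := by
  induction n with
  | zero => simp [cA_zero hν1, cB_zero hν]
  | succ n ih =>
    have hpos : ((n:ℝ) + 1) ≠ 0 := by positivity
    apply mul_left_cancel₀ hpos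
    rw [mul_one, mul_sum]
    have split : ∀ j ∈ range (n + 2), ((n:ℝ) + 1) * (cA ν (n + 1 - j) * cB ν j)
        = (((n + 1 - j : ℕ) : ℝ) * cA ν (n + 1 - j)) * cB ν j
          + ((j:ℝ) * cB ν j) * cA ν (n + 1 - j) := by
      intro j hj
      have hj' : j ≤ n + 1 := by simpa [Nat.lt_succ_iff] using mem_range.mp hj
      have e : ((n + 1 - j : ℕ) : ℝ) = (n:ℝ) + 1 - (j:ℝ) := by
        push_cast [Nat.cast_sub hj']; ring
      rw [e]; ring
    rw [sum_congr rfl split, sum_add_distrib]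
    have hA : ∑ j ∈ range (n + 2), (((n + 1 - j : ℕ) : ℝ) * cA ν (n + 1 - j)) * cB ν j
        = ∑ j ∈ range (n + 1), ((((n - j : ℕ) : ℝ) + 1 - ν) * cA ν (n - j)) * cB ν j := by
      rw [sum_range_succ]
      simp only [Nat.sub_self, Nat.cast_zero, zero_mul, add_zero]
      apply sum_congr rfl
      intro j hj
      have hj' : j ≤ n := by simpa [Nat.lt_succ_iff] using mem_range.mp hj
      have e : n + 1 - j = (n - j) + 1 := by omega
      rw [e]
      have e2 : (((n - j) + 1 : ℕ) : ℝ) = ((n - j : ℕ) : ℝ) + 1 := by push_cast; ring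
      rw [e2, recA hν1 (n - j)]
    have hB : ∑ j ∈ range (n + 2), ((j:ℝ) * cB ν j) * cA ν (n + 1 - j)
        = ∑ j ∈ range (n + 1), ((((j : ℕ) : ℝ) + ν) * cB ν j) * cA ν (n - j) := by
      rw [sum_range_succ']
      simp only [Nat.cast_zero, zero_mul, add_zero]
      apply sum_congr rfl
      intro j hj
      have e : n + 1 - (j + 1) = n - j := by omega
      have e2 : ((j + 1 : ℕ) : ℝ) = ((j : ℕ) : ℝ) + 1 := by push_cast; ring
      rw [e, e2, recB hν j]
    rw [hA, hB, ← sum_add_distrib]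
    have comb : ∑ j ∈ range (n + 1),
        (((((n - j : ℕ) : ℝ) + 1 - ν) * cA ν (n - j)) * cB ν j
          + ((((j : ℕ) : ℝ) + ν) * cB ν j) * cA ν (n - j))
        = ((n:ℝ) + 1) * ∑ j ∈ range (n + 1), cA ν (n - j) * cB ν j := by
      rw [mul_sum]
      apply sum_congr rfl
      intro j hj
      have hj' : j ≤ n := by simpa [Nat.lt_succ_iff] using mem_range.mp hj
      have e : ((n - j : ℕ) : ℝ) = (n:ℝ) - (j:ℝ) := by push_cast [Nat.cast_sub hj']; ring
      rw [e]; ring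
    rw [comb, ih, mul_one]

lemma rise_cA (m : ℕ) : rise ((m : ℝ) + 1) (-ν) / Real.Gamma (1 - ν) = cA ν m := by
  unfold rise cA
  rw [show (m:ℝ) + 1 + -ν = (m:ℝ) + 1 - ν by ring, div_div]

lemma rise_cB (m : ℕ) : rise ((m : ℝ) + 1) (ν - 1) / Real.Gamma ν = cB ν m := by
  unfold rise cB
  rw [show (m:ℝ) + 1 + (ν - 1) = (m:ℝ) + ν by ring, div_div]

lemma sum_Icc_int (F : ℤ → ℝ) (a : ℤ) (n : ℕ) :
    ∑ τ ∈ Icc (a + 1) (a + (n : ℤ)), F τ = ∑ j ∈ range n, F (a + 1 + j) := by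
  induction n with
  | zero => simp
  | succ n ih =>
    have e : Icc (a + 1) (a + ((n + 1 : ℕ) : ℤ))
        = insert (a + 1 + (n : ℤ)) (Icc (a + 1) (a + (n : ℤ))) := by
      ext τ
      simp only [Finset.mem_Icc, Finset.mem_insert]
      push_cast
      omega
    rw [e, Finset.sum_insert (by simp), sum_range_succ, ih, add_comm]

lemma cast_sub_helper {n j : ℕ} (hj : j < n) : ((n - 1 - j : ℕ) : ℝ) = (n : ℝ) - 1 - (j : ℝ) := by
  have h1 : (n - 1 - j) + (j + 1) = n := by omega
  have h2 : ((n - 1 - j : ℕ) : ℝ) + ((j : ℝ) + 1) = (n : ℝ) := by exact_mod_cast congrArg (Nat.cast : ℕ → ℝ) h1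
  linarith

lemma caputo_shift (a : ℤ) (x : ℤ → ℝ) (n : ℕ) :
    caputo ν a x (a + (n : ℤ)) = ∑ j ∈ range n, cA ν (n - 1 - j) * nabla x (a + 1 + j) := by
  unfold caputo
  rw [sum_Icc_int]
  apply sum_congr rfl
  intro j hj
  have hj' : j < n := mem_range.mp hj
  have e : (((a + (n : ℤ)) - (a + 1 + (j : ℤ)) + 1 : ℤ) : ℝ) = ((n - 1 - j : ℕ) : ℝ) + 1 := by
    rw [cast_sub_helper hj']
    push_cast
    ring
  rw [e, rise_cA]

lemma fsum_shift (a : ℤ) (f : ℤ → ℝ) (n : ℕ) :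
    fsum ν a f (a + (n : ℤ)) = ∑ j ∈ range n, cB ν (n - 1 - j) * f (a + 1 + j) := by
  unfold fsum
  rw [sum_Icc_int]
  apply sum_congr rfl
  intro j hj
  have hj' : j < n := mem_range.mp hj
  have e : (((a + (n : ℤ)) - (a + 1 + (j : ℤ)) + 1 : ℤ) : ℝ) = ((n - 1 - j : ℕ) : ℝ) + 1 := by
    rw [cast_sub_helper hj']
    push_cast
    ring
  rw [e, rise_cB]

include hν hν1 in
lemma Slem' (N : ℕ) : ∑ k ∈ range (N + 1), cB ν (N - k) * cA ν k = 1 := by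
  rw [← Finset.sum_range_reflect (fun k => cB ν (N - k) * cA ν k) (N + 1), ← Slem hν hν1 N]
  apply sum_congr rfl
  intro j hj
  have hj' : j ≤ N := by simpa [Nat.lt_succ_iff] using mem_range.mp hj
  have e1 : N + 1 - 1 - j = N - j := by omega
  have e2 : N - (N - j) = j := by omega
  simp only [e1, e2]
  ring

include hν hν1 in
lemma inv1 (n : ℕ) (w : ℕ → ℝ) :
    ∑ j ∈ range n, cB ν (n - 1 - j) * (∑ i ∈ range (j + 1), cA ν (j - i) * w i)
      = ∑ j ∈ range n, w j := by
  have step : ∀ j ∈ range n, cB ν (n - 1 - j) * (∑ i ∈ range (j + 1), cA ν (j - i) * w i)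
      = ∑ i ∈ Ico 0 (j + 1), cB ν (n - 1 - j) * (cA ν (j - i) * w i) := by
    intro j _
    rw [mul_sum, range_eq_Ico]
  rw [sum_congr rfl step, range_eq_Ico,
    ← sum_Ico_Ico_comm 0 n (fun i j => cB ν (n - 1 - j) * (cA ν (j - i) * w i))]
  apply sum_congr rfl
  intro i hi
  have hi' : i < n := (mem_Ico.mp hi).2
  rw [Finset.sum_Ico_eq_sum_range]
  have hN : n - i = (n - 1 - i) + 1 := by omega
  rw [hN]
  set N := n - 1 - i with hNdef
  have step2 : ∀ k ∈ range (N + 1),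
      cB ν (n - 1 - (i + k)) * (cA ν ((i + k) - i) * w i)
        = (cB ν (N - k) * cA ν k) * w i := by
    intro k hk
    have hk' : k ≤ N := by simpa [Nat.lt_succ_iff] using mem_range.mp hk
    have e1 : n - 1 - (i + k) = N - k := by omega
    have e2 : (i + k) - i = k := by omega
    rw [e1, e2]; ring
  rw [sum_congr rfl step2, ← sum_mul, Slem' hν hν1, one_mul]

include hν hν1 in
lemma key2 (M : ℕ) (hM : 1 ≤ M) :
    ∑ k ∈ range M, cA ν (M - 1 - k) * (cB ν (k + 1) - cB ν k) = - cA ν M := by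
  obtain ⟨N, rfl⟩ : ∃ N, M = N + 1 := ⟨M - 1, by omega⟩
  have e : ∀ k ∈ range (N + 1), cA ν (N + 1 - 1 - k) * (cB ν (k + 1) - cB ν k)
      = cA ν (N - k) * cB ν (k + 1) - cA ν (N - k) * cB ν k := by
    intro k _
    have : N + 1 - 1 - k = N - k := by omega
    rw [this]; ring
  rw [sum_congr rfl e, sum_sub_distrib, Slem hν hν1 N]
  have first : ∑ k ∈ range (N + 1), cA ν (N - k) * cB ν (k + 1) = 1 - cA ν (N + 1) := by
    have h := Slem hν hν1 (N + 1)
    rw [sum_range_succ'] at h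
    have e2 : ∀ k ∈ range (N + 1), cA ν (N + 1 - (k + 1)) * cB ν (k + 1)
        = cA ν (N - k) * cB ν (k + 1) := by
      intro k _
      have : N + 1 - (k + 1) = N - k := by omega
      rw [this]
    rw [sum_congr rfl e2, Nat.sub_zero, cB_zero hν, mul_one] at h
    linarith
  rw [first]
  ring

include hν hν1 in
lemma inv2 (n : ℕ) (f : ℕ → ℝ) :
    ∑ j ∈ range (n + 1), cA ν (n - j) *
      ((∑ i ∈ range (j + 1), cB ν (j - i) * f i) - ∑ i ∈ range j, cB ν (j - 1 - i) * f i)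
      = f n := by
  have step : ∀ j ∈ range (n + 1), cA ν (n - j) *
      ((∑ i ∈ range (j + 1), cB ν (j - i) * f i) - ∑ i ∈ range j, cB ν (j - 1 - i) * f i)
      = cA ν (n - j) * f j
        + ∑ i ∈ Ico 0 j, cA ν (n - j) * ((cB ν (j - i) - cB ν (j - 1 - i)) * f i) := by
    intro j _
    rw [sum_range_succ, Nat.sub_self, cB_zero hν, one_mul]
    have e2 : ∑ i ∈ range j, (cB ν (j - i) - cB ν (j - 1 - i)) * f i
        = (∑ i ∈ range j, cB ν (j - i) * f i) - ∑ i ∈ range j, cB ν (j - 1 - i) * f i := by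
      simp only [sub_mul]
      rw [Finset.sum_sub_distrib]
    have e : (∑ i ∈ range j, cB ν (j - i) * f i) + f j - ∑ i ∈ range j, cB ν (j - 1 - i) * f i
        = f j + ∑ i ∈ range j, (cB ν (j - i) - cB ν (j - 1 - i)) * f i := by
      rw [e2]; ring
    rw [e, mul_add, mul_sum, range_eq_Ico]
  rw [sum_congr rfl step, sum_add_distrib, range_eq_Ico,
    ← sum_Ico_Ico_comm' 0 (n + 1)
      (fun i j => cA ν (n - j) * ((cB ν (j - i) - cB ν (j - 1 - i)) * f i)),
    ← sum_add_distrib, ← range_eq_Ico, sum_range_succ]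
  have zeros : ∀ i ∈ range n, cA ν (n - i) * f i
      + ∑ j ∈ Ico (i + 1) (n + 1), cA ν (n - j) * ((cB ν (j - i) - cB ν (j - 1 - i)) * f i)
      = 0 := by
    intro i hi
    have hi' : i < n := mem_range.mp hi
    have hsum : ∑ j ∈ Ico (i + 1) (n + 1), cA ν (n - j) * ((cB ν (j - i) - cB ν (j - 1 - i)) * f i)
        = - (cA ν (n - i) * f i) := by
      rw [Finset.sum_Ico_eq_sum_range]
      have hM : n + 1 - (i + 1) = n - i := by omega
      rw [hM]
      have e : ∀ k ∈ range (n - i),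
          cA ν (n - (i + 1 + k)) * ((cB ν ((i + 1 + k) - i) - cB ν ((i + 1 + k) - 1 - i)) * f i)
          = (cA ν ((n - i) - 1 - k) * (cB ν (k + 1) - cB ν k)) * f i := by
        intro k hk
        have hk' : k < n - i := mem_range.mp hk
        have e1 : n - (i + 1 + k) = (n - i) - 1 - k := by omega
        have e2 : (i + 1 + k) - i = k + 1 := by omega
        have e3 : (i + 1 + k) - 1 - i = k := by omega
        rw [e1, e2, e3]; ring
      rw [sum_congr rfl e, ← sum_mul, key2 hν hν1 (n - i) (by omega)]
      ring
    rw [hsum]; ring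
  rw [Finset.sum_eq_zero zeros, zero_add, Nat.sub_self, cA_zero hν1, one_mul, Ico_self,
    sum_empty, add_zero]

include hν hν1 in
lemma fsum_caputo (a : ℤ) (x : ℤ → ℝ) (t : ℤ) (ht : a ≤ t) :
    fsum ν a (caputo ν a x) t = x t - x a := by
  obtain ⟨n, rfl⟩ : ∃ n : ℕ, t = a + (n : ℤ) := ⟨(t - a).toNat, by omega⟩
  rw [fsum_shift]
  have e : ∀ j ∈ range n, cB ν (n - 1 - j) * caputo ν a x (a + 1 + (j : ℤ))
      = cB ν (n - 1 - j) * ∑ i ∈ range (j + 1), cA ν (j - i) * nabla x (a + 1 + (i : ℤ)) := by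
    intro j _
    congr 1
    have e1 : a + 1 + (j : ℤ) = a + ((j + 1 : ℕ) : ℤ) := by push_cast; ring
    rw [e1, caputo_shift]
    apply sum_congr rfl
    intro i _
    have e2 : (j + 1) - 1 - i = j - i := by omega
    rw [e2]
  rw [sum_congr rfl e, inv1 hν hν1]
  have tel : ∀ j ∈ range n, nabla x (a + 1 + (j : ℤ))
      = x (a + ((j + 1 : ℕ) : ℤ)) - x (a + ((j : ℕ) : ℤ)) := by
    intro j _
    unfold nabla
    congr 2 <;> push_cast <;> ring
  rw [sum_congr rfl tel, Finset.sum_range_sub (fun m : ℕ => x (a + (m : ℤ)))]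
  norm_num

include hν hν1 in
lemma caputo_fsum (a : ℤ) (u : ℝ) (f : ℤ → ℝ) (t : ℤ) (ht : a + 1 ≤ t) :
    caputo ν a (fun s => u + fsum ν a f s) t = f t := by
  obtain ⟨n, rfl⟩ : ∃ n : ℕ, t = a + ((n + 1 : ℕ) : ℤ) := ⟨(t - a - 1).toNat, by omega⟩
  rw [caputo_shift]
  have e : ∀ j ∈ range (n + 1),
      cA ν ((n + 1) - 1 - j) * nabla (fun s => u + fsum ν a f s) (a + 1 + (j : ℤ))
      = cA ν (n - j) * ((∑ i ∈ range (j + 1), cB ν (j - i) * f (a + 1 + (i : ℤ)))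
          - ∑ i ∈ range j, cB ν (j - 1 - i) * f (a + 1 + (i : ℤ))) := by
    intro j _
    have e0 : (n + 1) - 1 - j = n - j := by omega
    rw [e0]
    congr 1
    unfold nabla
    simp only [add_sub_add_right_eq_sub]
    have e1 : a + 1 + (j : ℤ) = a + ((j + 1 : ℕ) : ℤ) := by push_cast; ring
    have e2 : a + 1 + (j : ℤ) - 1 = a + ((j : ℕ) : ℤ) := by push_cast; ring
    rw [show u + fsum ν a f (a + 1 + (j:ℤ)) - (u + fsum ν a f (a + 1 + (j:ℤ) - 1))
        = fsum ν a f (a + 1 + (j:ℤ)) - fsum ν a f (a + 1 + (j:ℤ) - 1) by ring,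
      e2, e1, fsum_shift, fsum_shift]
    simp [Nat.add_sub_cancel]
  rw [sum_congr rfl e, inv2 hν hν1 n (fun i => f (a + 1 + (i : ℤ)))]
  congr 1
  push_cast
  ring

lemma fsum_smul (a : ℤ) (v : ℝ) (g : ℤ → ℝ) (t : ℤ) :
    fsum ν a (fun τ => v * g τ) t = v * fsum ν a g t := by
  unfold fsum
  rw [mul_sum]
  exact sum_congr rfl fun τ _ => by ring

lemma fsum_base (a : ℤ) (g : ℤ → ℝ) : fsum ν a g a = 0 := by
  unfold fsum
  rw [Finset.Icc_eq_empty (by omega), sum_empty]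

include hν in
lemma fsum_first (a : ℤ) (g : ℤ → ℝ) : fsum ν a g (a + 1) = g (a + 1) := by
  have e : (a + 1 : ℤ) = a + ((1 : ℕ) : ℤ) := by norm_num
  rw [e, fsum_shift, Finset.sum_range_one]
  norm_num [cB_zero hν]


theorem bvp_trivial_iff_rho_ne_zero (ν : ℝ) (hν : 0 < ν) (hν1 : ν < 1) (a b : ℤ)
    (hab : a + 2 ≤ b) (p : ℤ → ℝ) (hp : ∀ t, a + 1 ≤ t → t ≤ b → 0 < p t)
    (α β γ δ : ℝ) (hαβ : 0 < α ^ 2 + β ^ 2) (hγδ : 0 < γ ^ 2 + δ ^ 2) :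
    (∀ x : ℤ → ℝ,
      (∀ t, a + 1 ≤ t → t ≤ b - 1 →
        p (t + 1) * caputo ν a x (t + 1) - p t * caputo ν a x t = 0) →
      α * x a - β * caputo ν a x (a + 1) = 0 →
      γ * x b + δ * caputo ν a x b = 0 →
      ∀ t, a ≤ t → t ≤ b → x t = 0) ↔
    α * γ * fsum ν a (fun τ => 1 / p τ) b + α * δ / p b + β * γ / p (a + 1) ≠ 0 := by
  have hp1 : 0 < p (a + 1) := hp _ le_rfl (by omega)
  have hpb : 0 < p b := hp b (by omega) le_rfl
  set F : ℝ := fsum ν a (fun τ => 1 / p τ) b with hF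
  constructor
  · intro htriv
    by_contra hρ

    set u : ℝ := β / p (a + 1) with hu
    set x : ℤ → ℝ := fun s => u + fsum ν a (fun τ => α * (1 / p τ)) s with hxdef
    have hcx : ∀ t, a + 1 ≤ t → caputo ν a x t = α * (1 / p t) := by
      intro t ht
      exact caputo_fsum hν hν1 a u _ t ht
    have h1 : ∀ t, a + 1 ≤ t → t ≤ b - 1 →
        p (t + 1) * caputo ν a x (t + 1) - p t * caputo ν a x t = 0 := by
      intro t ht1 ht2
      rw [hcx t ht1, hcx (t + 1) (by omega)]
      have hpt : p t ≠ 0 := (hp t ht1 (by omega)).ne'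
      have hpt1 : p (t + 1) ≠ 0 := (hp (t + 1) (by omega) (by omega)).ne'
      field_simp
      ring
    have hxa : x a = u := by
      simp only [hxdef, fsum_base, add_zero]
    have hbc1 : α * x a - β * caputo ν a x (a + 1) = 0 := by
      rw [hxa, hcx (a + 1) le_rfl, hu]
      ring
    have hbc2 : γ * x b + δ * caputo ν a x b = 0 := by
      rw [hcx b (by omega)]
      simp only [hxdef]
      rw [fsum_smul, ← hF]
      linear_combination hρ
    have h0 := htriv x h1 hbc1 hbc2
    have hxa0 : x a = 0 := h0 a le_rfl (by omega)
    have hxa10 : x (a + 1) = 0 := h0 (a + 1) (by omega) (by omega)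
    have hu0 : u = 0 := by rw [← hxa]; exact hxa0
    have hβ : β = 0 := by
      have := hu0
      rw [hu, div_eq_zero_iff] at this
      exact this.resolve_right hp1.ne'
    have hx1 : x (a + 1) = u + α * (1 / p (a + 1)) := by
      simp only [hxdef]
      rw [fsum_first hν]
    have hα : α = 0 := by
      rw [hx1, hu0, zero_add] at hxa10
      rcases mul_eq_zero.mp hxa10 with h | h
      · exact h
      · exact absurd h (by positivity)
    rw [hα, hβ] at hαβ
    norm_num at hαβ
  · intro hρ x heq hbc1 hbc2 t hta htb
    set c : ℝ := p (a + 1) * caputo ν a x (a + 1) with hc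
    have hconst : ∀ n : ℕ, a + 1 + (n : ℤ) ≤ b →
        p (a + 1 + (n : ℤ)) * caputo ν a x (a + 1 + (n : ℤ)) = c := by
      intro n
      induction n with
      | zero => intro _; norm_num [hc]
      | succ n ih =>
        intro hle
        have hle' : a + 1 + (n : ℤ) ≤ b := by push_cast at hle; omega
        have hstep := heq (a + 1 + (n : ℤ)) (by omega) (by push_cast at hle; omega)
        rw [sub_eq_zero] at hstep
        have e : a + 1 + ((n + 1 : ℕ) : ℤ) = (a + 1 + (n : ℤ)) + 1 := by push_cast; ring
        rw [e, hstep, ih hle']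
    have hcap : ∀ s, a + 1 ≤ s → s ≤ b → caputo ν a x s = c * (1 / p s) := by
      intro s h1 h2
      have hps : p s ≠ 0 := (hp s h1 h2).ne'
      obtain ⟨n, rfl⟩ : ∃ n : ℕ, s = a + 1 + (n : ℤ) := ⟨(s - a - 1).toNat, by omega⟩
      have h := hconst n h2
      field_simp
      linarith
    have hx : ∀ s, a ≤ s → s ≤ b → x s = x a + c * fsum ν a (fun τ => 1 / p τ) s := by
      intro s h1 h2
      have hfc := fsum_caputo hν hν1 a x s h1
      have e : fsum ν a (caputo ν a x) s = c * fsum ν a (fun τ => 1 / p τ) s := by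
        unfold fsum
        rw [mul_sum]
        apply sum_congr rfl
        intro τ hτ
        have hτ' := Finset.mem_Icc.mp hτ
        rw [hcap τ hτ'.1 (le_trans hτ'.2 h2)]
        ring
      linarith
    have hca1 : caputo ν a x (a + 1) = c * (1 / p (a + 1)) := hcap _ le_rfl (by omega)
    have hcb : caputo ν a x b = c * (1 / p b) := hcap b (by omega) le_rfl
    have hxb : x b = x a + c * F := hx b (by omega) le_rfl
    have E1 : α * x a = β * (c * (1 / p (a + 1))) := by
      rw [hca1] at hbc1
      linarith
    have E2 : γ * x a = -(γ * (c * F) + δ * (c * (1 / p b))) := by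
      rw [hcb, hxb] at hbc2
      linear_combination hbc2
    have hXa : x a = 0 := by
      have hz : (α * γ * F + α * δ / p b + β * γ / p (a + 1)) * x a = 0 := by
        linear_combination (γ * F + δ * (1 / p b)) * E1 + (β * (1 / p (a + 1))) * E2
      exact (mul_eq_zero.mp hz).resolve_left hρ
    have hC : c = 0 := by
      have hz : (α * γ * F + α * δ / p b + β * γ / p (a + 1)) * c = 0 := by
        linear_combination α * E2 - γ * E1
      exact (mul_eq_zero.mp hz).resolve_left hρ
    rw [hx t hta htb, hXa, hC]
    ring
end

section
/- The Green's function G(t,s) for the BVP ∇∇_{a*}^ν x(t+1)=0, x(a)=x(b)=0 satisfies G(t,s) ≥ −((b−a)/4)·Γ(b−a+1)/(Γ(ν+1)Γ(b−a+ν)) for all t, s ∈ ℕ_a^b. -/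
open Finset

/-- Green function for the conjugate BVP `∇∇_{a*}^ν x(t+1) = 0`, `x(a)=x(b)=0`. -/
noncomputable def Grn (ν : ℝ) (a b t s : ℤ) : ℝ :=
  if t ≤ s then
    -(rise ((b - s : ℤ) : ℝ) ν * rise ((t - a : ℤ) : ℝ) ν) /
      (Real.Gamma (1 + ν) * rise ((b - a : ℤ) : ℝ) ν)
  else
    -(rise ((b - s : ℤ) : ℝ) ν * rise ((t - a : ℤ) : ℝ) ν) /
      (Real.Gamma (1 + ν) * rise ((b - a : ℤ) : ℝ) ν)
      + rise ((t - s : ℤ) : ℝ) ν / Real.Gamma (1 + ν)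

section aux
variable {ν : ℝ}

lemma gamma_one_add_le_one (hν : 0 < ν) (hν1 : ν < 1) : Real.Gamma (1 + ν) ≤ 1 := by
  have h := Real.convexOn_log_Gamma.2 (Set.mem_Ioi.2 one_pos) (Set.mem_Ioi.2 two_pos)
    (by linarith : (0:ℝ) ≤ 1 - ν) hν.le (by ring)
  simp only [Function.comp_apply, smul_eq_mul, Real.Gamma_one, Real.Gamma_two,
    Real.log_one, mul_zero, add_zero] at h
  have h' : Real.log (Real.Gamma (1 + ν)) ≤ 0 := by
    have he : (1 - ν) * 1 + ν * 2 = 1 + ν := by ring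
    rwa [he] at h
  have hpos : 0 < Real.Gamma (1 + ν) := Real.Gamma_pos_of_pos (by linarith)
  exact (Real.log_nonpos_iff hpos.le).1 h'

lemma rise_zero' : rise ((0:ℤ):ℝ) ν = 0 := by
  simp [rise, Real.Gamma_zero]

lemma rise_step (hν : 0 < ν) {x : ℝ} (hx : 0 < x) :
    rise (x + 1) ν = rise x ν * ((x + ν) / x) := by
  have h1 : Real.Gamma (x + 1 + ν) = (x + ν) * Real.Gamma (x + ν) := by
    rw [show x + 1 + ν = (x + ν) + 1 by ring, Real.Gamma_add_one (by positivity)]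
  have h2 : Real.Gamma (x + 1) = x * Real.Gamma x := Real.Gamma_add_one hx.ne'
  have hg : Real.Gamma x ≠ 0 := (Real.Gamma_pos_of_pos hx).ne'
  unfold rise
  rw [h1, h2]
  field_simp

lemma rise_pos (hν : 0 < ν) {m : ℤ} (hm : 1 ≤ m) : 0 < rise (m:ℝ) ν := by
  have h1 : (1:ℝ) ≤ (m:ℝ) := by exact_mod_cast hm
  exact div_pos (Real.Gamma_pos_of_pos (by linarith)) (Real.Gamma_pos_of_pos (by linarith))

lemma rise_one_le (hν : 0 < ν) (hν1 : ν < 1) {m : ℤ} (hm : 1 ≤ m) :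
    rise (m:ℝ) ν ≤ (m:ℝ) := by
  refine Int.le_induction (motive := fun m _ => rise (m:ℝ) ν ≤ (m:ℝ)) ?_ ?_ m hm
  · show rise ((1:ℤ):ℝ) ν ≤ ((1:ℤ):ℝ)
    have h : rise ((1:ℤ):ℝ) ν = Real.Gamma (1 + ν) := by
      norm_num [rise, Real.Gamma_one]
    rw [h]; simpa using gamma_one_add_le_one hν hν1
  · intro k hk ih
    show rise (((k+1:ℤ)):ℝ) ν ≤ ((k+1:ℤ):ℝ)
    have hkpos : (0:ℝ) < (k:ℝ) := by exact_mod_cast hk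
    have hstep : rise (((k+1:ℤ)):ℝ) ν = rise (k:ℝ) ν * (((k:ℝ) + ν) / k) := by
      push_cast
      exact rise_step hν hkpos
    rw [hstep]
    have hfac : (0:ℝ) ≤ ((k:ℝ) + ν) / k := by positivity
    calc rise (k:ℝ) ν * (((k:ℝ) + ν) / k) ≤ (k:ℝ) * (((k:ℝ) + ν) / k) :=
          mul_le_mul_of_nonneg_right ih hfac
      _ = (k:ℝ) + ν := by field_simp
      _ ≤ ((k+1:ℤ):ℝ) := by push_cast; linarith

lemma rise_le (hν : 0 < ν) (hν1 : ν < 1) {m : ℤ} (hm : 0 ≤ m) :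
    rise (m:ℝ) ν ≤ (m:ℝ) := by
  rcases eq_or_lt_of_le hm with h | h
  · rw [← h]; simp [rise, Real.Gamma_zero]
  · exact rise_one_le hν hν1 h

lemma rise_nonneg (hν : 0 < ν) {m : ℤ} (hm : 0 ≤ m) : 0 ≤ rise (m:ℝ) ν := by
  rcases eq_or_lt_of_le hm with h | h
  · rw [← h]; simp [rise, Real.Gamma_zero]
  · exact (rise_pos hν h).le

lemma rise_mono (hν : 0 < ν) {m k : ℤ} (hm : 1 ≤ m) (hmk : m ≤ k) :
    rise (m:ℝ) ν ≤ rise (k:ℝ) ν := by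
  refine Int.le_induction (motive := fun k _ => rise (m:ℝ) ν ≤ rise (k:ℝ) ν) (le_refl _) ?_ k hmk
  intro j hj ih
  show rise (m:ℝ) ν ≤ rise ((j+1:ℤ):ℝ) ν
  have hj1 : (1:ℝ) ≤ (j:ℝ) := by exact_mod_cast le_trans hm hj
  have hjpos : (0:ℝ) < (j:ℝ) := by linarith
  have hstep : rise (((j+1:ℤ)):ℝ) ν = rise (j:ℝ) ν * (((j:ℝ) + ν) / j) := by
    push_cast; exact rise_step hν hjpos
  have hpos : 0 < rise (j:ℝ) ν := rise_pos hν (le_trans hm hj)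
  have hfac : (1:ℝ) ≤ ((j:ℝ) + ν) / j := by
    rw [le_div_iff₀ hjpos]; linarith
  calc rise (m:ℝ) ν ≤ rise (j:ℝ) ν := ih
    _ ≤ rise (j:ℝ) ν * (((j:ℝ) + ν) / j) := le_mul_of_one_le_right hpos.le hfac
    _ = rise (((j+1:ℤ)):ℝ) ν := hstep.symm

lemma rise_lip (hν : 0 < ν) (hν1 : ν < 1) {m k : ℤ} (hm : 1 ≤ m) (hmk : m ≤ k) :
    rise (k:ℝ) ν - rise (m:ℝ) ν ≤ ν * ((k:ℝ) - m) := by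
  refine Int.le_induction
    (motive := fun k _ => rise (k:ℝ) ν - rise (m:ℝ) ν ≤ ν * ((k:ℝ) - m)) (by simp) ?_ k hmk
  intro j hj ih
  show rise ((j+1:ℤ):ℝ) ν - rise (m:ℝ) ν ≤ ν * (((j+1:ℤ):ℝ) - m)
  have hj1 : (1:ℝ) ≤ (j:ℝ) := by exact_mod_cast le_trans hm hj
  have hjpos : (0:ℝ) < (j:ℝ) := by linarith
  have hstep : rise (((j+1:ℤ)):ℝ) ν = rise (j:ℝ) ν * (((j:ℝ) + ν) / j) := by
    push_cast; exact rise_step hν hjpos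
  have hle : rise (j:ℝ) ν ≤ (j:ℝ) := rise_one_le hν hν1 (le_trans hm hj)
  have hdiff : rise (((j+1:ℤ)):ℝ) ν - rise (j:ℝ) ν ≤ ν := by
    rw [hstep]
    have he : rise (j:ℝ) ν * (((j:ℝ) + ν) / j) - rise (j:ℝ) ν
        = rise (j:ℝ) ν * (ν / j) := by field_simp; ring
    rw [he]
    calc rise (j:ℝ) ν * (ν / j) ≤ (j:ℝ) * (ν / j) :=
          mul_le_mul_of_nonneg_right hle (by positivity)
      _ = ν := by field_simp
  have hc : ((j+1:ℤ):ℝ) = (j:ℝ) + 1 := by push_cast; ring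
  rw [hc] at hdiff ⊢
  linarith

end aux

theorem greens_function_lower_bound (ν : ℝ) (hν : 0 < ν) (hν1 : ν < 1) (a b : ℤ)
    (hab : a < b) :
    ∀ t s : ℤ, a ≤ t → t ≤ b → a ≤ s → s ≤ b →
      Grn ν a b t s ≥ -(((b : ℝ) - a) / 4) *
        (Real.Gamma ((b : ℝ) - a + 1) /
          (Real.Gamma (ν + 1) * Real.Gamma ((b : ℝ) - a + ν))) := by
  intro t s ht1 ht2 hs1 hs2
  have hg : 0 < Real.Gamma (1 + ν) := Real.Gamma_pos_of_pos (by linarith)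
  have hba1 : (1:ℤ) ≤ b - a := by omega
  have hR : 0 < rise ((b - a : ℤ) : ℝ) ν := rise_pos hν hba1
  have hD : 0 < Real.Gamma (1 + ν) * rise ((b - a : ℤ) : ℝ) ν := mul_pos hg hR
  have hbaR : (0:ℝ) < (b:ℝ) - a := by
    have : ((1:ℤ):ℝ) ≤ ((b - a : ℤ) : ℝ) := by exact_mod_cast hba1
    push_cast at this; linarith
  -- rewrite the RHS
  have hrhs : -(((b : ℝ) - a) / 4) *
        (Real.Gamma ((b : ℝ) - a + 1) /
          (Real.Gamma (ν + 1) * Real.Gamma ((b : ℝ) - a + ν)))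
      = -(((b:ℝ) - a)^2 / 4) / (Real.Gamma (1 + ν) * rise ((b - a : ℤ) : ℝ) ν) := by
    have hc : ((b - a : ℤ) : ℝ) = (b:ℝ) - a := by push_cast; ring
    have h1 : Real.Gamma ((b:ℝ) - a + 1) = ((b:ℝ) - a) * Real.Gamma ((b:ℝ) - a) :=
      Real.Gamma_add_one hbaR.ne'
    have h2 : Real.Gamma (ν + 1) = Real.Gamma (1 + ν) := by rw [add_comm]
    have hg1 : Real.Gamma ((b:ℝ) - a) ≠ 0 := (Real.Gamma_pos_of_pos hbaR).ne'
    have hg2 : Real.Gamma ((b:ℝ) - a + ν) ≠ 0 := (Real.Gamma_pos_of_pos (by linarith)).ne'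
    rw [hc, h1, h2]
    unfold rise
    field_simp
  rw [ge_iff_le, hrhs]
  -- bounds on the factors
  have hA : rise ((b - s : ℤ) : ℝ) ν ≤ ((b - s : ℤ) : ℝ) := rise_le hν hν1 (by omega)
  have hB : rise ((t - a : ℤ) : ℝ) ν ≤ ((t - a : ℤ) : ℝ) := rise_le hν hν1 (by omega)
  have hA0 : 0 ≤ rise ((b - s : ℤ) : ℝ) ν := rise_nonneg hν (by omega)
  have hB0 : 0 ≤ rise ((t - a : ℤ) : ℝ) ν := rise_nonneg hν (by omega)
  have hcA : ((b - s : ℤ) : ℝ) = (b:ℝ) - s := by push_cast; ring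
  have hcB : ((t - a : ℤ) : ℝ) = (t:ℝ) - a := by push_cast; ring
  replace hA := hA.trans_eq hcA
  replace hB := hB.trans_eq hcB
  have htR : (a:ℝ) ≤ (t:ℝ) ∧ (t:ℝ) ≤ (b:ℝ) ∧ (a:ℝ) ≤ (s:ℝ) ∧ (s:ℝ) ≤ (b:ℝ) := by
    refine ⟨?_, ?_, ?_, ?_⟩ <;> exact_mod_cast (by assumption)
  obtain ⟨hta, htb, hsa, hsb⟩ := htR
  unfold Grn
  split_ifs with hts
  · -- case t ≤ s
    have htsR : (t:ℝ) ≤ (s:ℝ) := by exact_mod_cast hts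
    rw [div_le_div_iff_of_pos_right hD]
    have hprod : rise ((b - s : ℤ) : ℝ) ν * rise ((t - a : ℤ) : ℝ) ν
        ≤ ((b:ℝ) - s) * ((t:ℝ) - a) :=
      mul_le_mul hA hB hB0 (by linarith)
    nlinarith [sq_nonneg ((b:ℝ) - t - (t - a)), mul_nonneg (by linarith : (0:ℝ) ≤ (t:ℝ) - a) (by linarith : (0:ℝ) ≤ (s:ℝ) - t)]
  · -- case s < t
    push_neg at hts
    have htsR : (s:ℝ) < (t:ℝ) := by exact_mod_cast hts
    have hts1 : (1:ℤ) ≤ t - s := by omega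
    have hC0 : 0 ≤ rise ((t - s : ℤ) : ℝ) ν := rise_nonneg hν (by omega)
    have hmonoAC : rise ((t - s : ℤ) : ℝ) ν ≤ rise ((b - s : ℤ) : ℝ) ν :=
      rise_mono hν hts1 (by omega)
    have hmonoBR : rise ((t - a : ℤ) : ℝ) ν ≤ rise ((b - a : ℤ) : ℝ) ν :=
      rise_mono hν (by omega) (by omega)
    have hlip : rise ((b - s : ℤ) : ℝ) ν - rise ((t - s : ℤ) : ℝ) ν
        ≤ ν * (((b - s : ℤ):ℝ) - ((t - s : ℤ):ℝ)) := rise_lip hν hν1 hts1 (by omega)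
    replace hlip := hlip.trans_eq (by push_cast; ring :
      ν * (((b - s : ℤ):ℝ) - ((t - s : ℤ):ℝ)) = ν * ((b:ℝ) - t))
    -- key product inequality
    have key : rise ((b - s : ℤ) : ℝ) ν * rise ((t - a : ℤ) : ℝ) ν
        - rise ((t - s : ℤ) : ℝ) ν * rise ((b - a : ℤ) : ℝ) ν ≤ ((b:ℝ) - a)^2 / 4 := by
      have e1 : rise ((b - s : ℤ) : ℝ) ν * rise ((t - a : ℤ) : ℝ) ν
          - rise ((t - s : ℤ) : ℝ) ν * rise ((b - a : ℤ) : ℝ) ν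
          = rise ((t - a : ℤ) : ℝ) ν * (rise ((b - s : ℤ) : ℝ) ν - rise ((t - s : ℤ) : ℝ) ν)
            + rise ((t - s : ℤ) : ℝ) ν * (rise ((t - a : ℤ) : ℝ) ν - rise ((b - a : ℤ) : ℝ) ν) := by
        ring
      have e2 : rise ((t - s : ℤ) : ℝ) ν *
          (rise ((t - a : ℤ) : ℝ) ν - rise ((b - a : ℤ) : ℝ) ν) ≤ 0 :=
        mul_nonpos_of_nonneg_of_nonpos hC0 (by linarith)
      have e3 : rise ((t - a : ℤ) : ℝ) ν * (rise ((b - s : ℤ) : ℝ) ν - rise ((t - s : ℤ) : ℝ) ν)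
          ≤ ((t:ℝ) - a) * (ν * ((b:ℝ) - t)) := by
        have hd0 : 0 ≤ rise ((b - s : ℤ) : ℝ) ν - rise ((t - s : ℤ) : ℝ) ν := by linarith
        exact mul_le_mul hB hlip hd0 (by linarith)
      have e4 : ((t:ℝ) - a) * (ν * ((b:ℝ) - t)) ≤ ((b:ℝ) - a)^2 / 4 := by
        nlinarith [sq_nonneg ((b:ℝ) - t - (t - a)),
          mul_nonneg (mul_nonneg (by linarith : (0:ℝ) ≤ (t:ℝ) - a) (by linarith : (0:ℝ) ≤ (b:ℝ) - t)) (by linarith : (0:ℝ) ≤ 1 - ν)]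
      linarith
    have hRe : rise ((t - s : ℤ) : ℝ) ν / Real.Gamma (1 + ν)
        = rise ((t - s : ℤ) : ℝ) ν * rise ((b - a : ℤ) : ℝ) ν /
          (Real.Gamma (1 + ν) * rise ((b - a : ℤ) : ℝ) ν) := by
      rw [mul_div_mul_right _ _ hR.ne']
    rw [hRe, ← add_div, div_le_div_iff_of_pos_right hD]
    linarith
end
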